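/- arXiv:2605.17051 — 2 statements merged into one kernel-verified Lean document; each statement's English description precedes it below -/
import Mathlib

section
/- Let σ be a finite request sequence and let P be a phase of OPT* that is not the first phase, with pivot x and first request σ_i. Then x ∈ σ_i. -/
/-- Cost of serving request `r` when node `c` is at the center of the star. -/
def serveCost {V : Type*} [DecidableEq V] (c : V) (r : V × V) : ℕ :=
  if c = r.1 ∨ c = r.2 then 1 else 2

/-- Total cost of the schedule `cs` on request sequence `σ`, starting from
initial center `c₀`. -/
def schedCost {V : Type*} [DecidableEq V] (c₀ : V) : List (V × V) → List V → ℕ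
  | [], _ => 0
  | _ :: _, [] => 0
  | r :: σ, c :: cs => (if c = c₀ then 0 else 1) + serveCost c r + schedCost c σ cs

/-- Minimum cost over all (offline) schedules for `σ` starting with center `c₀`. -/
noncomputable def OPT {V : Type*} [DecidableEq V] (c₀ : V) (σ : List (V × V)) : ℕ :=
  sInf {k | ∃ cs : List V, cs.length = σ.length ∧ schedCost c₀ σ cs = k}

/-- The sequence of phase lengths of a schedule: the lengths of the maximal
runs of consecutive requests served with the same center. -/
def phaseLens {V : Type*} [DecidableEq V] (cs : List V) : List ℕ :=
  (cs.splitBy (· == ·)).map List.length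

/-- `IsOptStar c₀ σ cs` : `cs` is a minimum-cost schedule for `σ` (from
initial center `c₀`) that, among all minimum-cost schedules, minimizes the
lexicographic order on the reversed sequence of its phase lengths
(last phase length compared first). -/
def IsOptStar {V : Type*} [DecidableEq V] (c₀ : V) (σ : List (V × V))
    (cs : List V) : Prop :=
  cs.length = σ.length ∧ schedCost c₀ σ cs = OPT c₀ σ ∧
    ∀ cs' : List V, cs'.length = σ.length → schedCost c₀ σ cs' = OPT c₀ σ →
      (phaseLens cs).reverse ≤ (phaseLens cs').reverse

/-! ### Auxiliary lemmas about `List.splitBy` -/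

theorem splitBy_loop_true {α : Type*} {R : α → α → Bool} {ag a : α} (hR : R ag a = true)
    (l : List α) (g : List α) (gs : List (List α)) :
    List.splitBy.loop R (a :: l) ag g gs = List.splitBy.loop R l a (ag :: g) gs := by
  rw [List.splitBy.loop, hR]

theorem splitBy_loop_false {α : Type*} {R : α → α → Bool} {ag a : α} (hR : R ag a = false)
    (l : List α) (g : List α) (gs : List (List α)) :
    List.splitBy.loop R (a :: l) ag g gs =
      List.splitBy.loop R l a [] ((ag :: g).reverse :: gs) := by
  rw [List.splitBy.loop, hR]

theorem splitBy_loop_eq {α : Type*} (R : α → α → Bool) :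
    ∀ (l : List α) (ag : α) (g : List α) (gs : List (List α)),
      List.splitBy.loop R l ag g gs =
        gs.reverse ++ (g.reverse ++ (List.splitBy.loop R l ag [] []).headD []) ::
          (List.splitBy.loop R l ag [] []).tail
  | [], ag, g, gs => by simp [List.splitBy.loop]
  | a :: l, ag, g, gs => by
    cases hR : R ag a with
    | true =>
      rw [splitBy_loop_true hR, splitBy_loop_eq R l a (ag :: g) gs,
        splitBy_loop_true hR l [] [], splitBy_loop_eq R l a [ag] []]
      simp
    | false =>
      rw [splitBy_loop_false hR, splitBy_loop_eq R l a [] ((ag :: g).reverse :: gs),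
        splitBy_loop_false hR l [] [], splitBy_loop_eq R l a [] [[ag].reverse]]
      simp

theorem splitBy_cons_ne_nil {α : Type*} (R : α → α → Bool) (a : α) (l : List α) :
    List.splitBy R (a :: l) =
      (List.splitBy R (a :: l)).headD [] :: (List.splitBy R (a :: l)).tail := by
  show List.splitBy.loop R l a [] [] = _
  conv_lhs => rw [splitBy_loop_eq]
  simp [List.splitBy]

theorem splitBy_cons_true {α : Type*} {R : α → α → Bool} {a b : α} (hR : R a b = true)
    (l : List α) :
    List.splitBy R (a :: b :: l) =
      (a :: (List.splitBy R (b :: l)).headD []) :: (List.splitBy R (b :: l)).tail := by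
  show List.splitBy.loop R (b :: l) a [] [] = _
  rw [splitBy_loop_true hR, splitBy_loop_eq]
  simp [List.splitBy]

theorem splitBy_cons_false {α : Type*} {R : α → α → Bool} {a b : α} (hR : R a b = false)
    (l : List α) :
    List.splitBy R (a :: b :: l) = [a] :: List.splitBy R (b :: l) := by
  show List.splitBy.loop R (b :: l) a [] [] = _
  rw [splitBy_loop_false hR, splitBy_loop_eq]
  show _ = [a] :: List.splitBy.loop R l b [] []
  conv_rhs => rw [splitBy_loop_eq R l b [] []]
  simp

/-! ### Auxiliary lemmas about `phaseLens` -/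

section PhaseLens

variable {V : Type*} [DecidableEq V]

theorem phaseLens_cons_ne_nil (a : V) (l : List V) :
    phaseLens (a :: l) = (phaseLens (a :: l)).headD 0 :: (phaseLens (a :: l)).tail := by
  unfold phaseLens
  conv_lhs => rw [splitBy_cons_ne_nil (· == ·) a l]
  rw [splitBy_cons_ne_nil (· == ·) a l]
  simp

theorem phaseLens_cons_eq {x y : V} (h : x = y) (l : List V) :
    phaseLens (x :: y :: l) =
      ((phaseLens (y :: l)).headD 0 + 1) :: (phaseLens (y :: l)).tail := by
  unfold phaseLens
  rw [splitBy_cons_true (by simp [h]) l]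
  rw [splitBy_cons_ne_nil (· == ·) y l]
  simp [Nat.add_comm]

theorem phaseLens_cons_ne {x y : V} (h : x ≠ y) (l : List V) :
    phaseLens (x :: y :: l) = 1 :: phaseLens (y :: l) := by
  unfold phaseLens
  rw [splitBy_cons_false (by simp [h]) l]
  simp

/-- Key structural comparison: delaying a migration by one step (when the next
two requests are served by the same pivot) extends the previous phase by one
and shortens the new phase by one. -/
theorem key_phase (a b : V) (hab : a ≠ b) :
    ∀ (A : List V) (B : List V), ∃ (M : List ℕ) (m k : ℕ) (rest : List ℕ),
      phaseLens (A ++ a :: b :: b :: B) = M ++ m :: (k + 1) :: rest ∧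
      phaseLens (A ++ a :: a :: b :: B) = M ++ (m + 1) :: k :: rest
  | [], B => by
    have hbB := phaseLens_cons_ne_nil b B
    set h0 := (phaseLens (b :: B)).headD 0 with hh0
    set t0 := (phaseLens (b :: B)).tail with ht0
    refine ⟨[], 1, h0, t0, ?_, ?_⟩
    · simp only [List.nil_append]
      rw [phaseLens_cons_ne hab, phaseLens_cons_eq rfl]
    · simp only [List.nil_append]
      rw [phaseLens_cons_eq rfl, phaseLens_cons_ne hab B, hbB]
      simp
  | x :: A', B => by
    obtain ⟨M, m, k, rest, h1, h2⟩ := key_phase a b hab A' B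
    obtain ⟨y, u', v', hu, hv⟩ :
        ∃ y u' v', A' ++ a :: b :: b :: B = y :: u' ∧ A' ++ a :: a :: b :: B = y :: v' := by
      cases A' with
      | nil => exact ⟨a, _, _, rfl, rfl⟩
      | cons z A'' => exact ⟨z, _, _, rfl, rfl⟩
    by_cases hxy : x = y
    · rw [show x :: A' ++ a :: b :: b :: B = x :: (A' ++ a :: b :: b :: B) from rfl, hu,
        phaseLens_cons_eq hxy u', ← hu, h1]
      rw [show x :: A' ++ a :: a :: b :: B = x :: (A' ++ a :: a :: b :: B) from rfl, hv,
        phaseLens_cons_eq hxy v', ← hv, h2]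
      cases M with
      | nil => exact ⟨[], m + 1, k, rest, by simp, by simp⟩
      | cons m₀ M' => exact ⟨(m₀ + 1) :: M', m, k, rest, by simp, by simp⟩
    · rw [show x :: A' ++ a :: b :: b :: B = x :: (A' ++ a :: b :: b :: B) from rfl, hu,
        phaseLens_cons_ne hxy u', ← hu, h1]
      rw [show x :: A' ++ a :: a :: b :: B = x :: (A' ++ a :: a :: b :: B) from rfl, hv,
        phaseLens_cons_ne hxy v', ← hv, h2]
      exact ⟨1 :: M, m, k, rest, rfl, rfl⟩

end PhaseLens

/-- Lexicographic strict inequality with a common prefix. -/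
theorem lex_append_lt (p : List ℕ) {x y : ℕ} (h : x < y) (u v : List ℕ) :
    p ++ x :: u < p ++ y :: v := by
  induction p with
  | nil => exact List.Lex.rel h
  | cons z p ih => exact List.Lex.cons ih

/-! ### Auxiliary lemmas about costs -/

section Cost

variable {V : Type*} [DecidableEq V]

theorem serveCost_le_two (c : V) (r : V × V) : serveCost c r ≤ 2 := by
  unfold serveCost; split <;> omega

theorem schedCost_append (σ₁ σ₂ : List (V × V)) :
    ∀ (cs₁ : List V) (cs₂ : List V) (c₀ : V), cs₁.length = σ₁.length →
      schedCost c₀ (σ₁ ++ σ₂) (cs₁ ++ cs₂) =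
        schedCost c₀ σ₁ cs₁ + schedCost (cs₁.getLastD c₀) σ₂ cs₂ := by
  induction σ₁ with
  | nil =>
    intro cs₁ cs₂ c₀ h
    rw [List.length_nil] at h
    rw [List.eq_nil_of_length_eq_zero h]
    simp [schedCost]
  | cons r σ' ih =>
    intro cs₁ cs₂ c₀ h
    cases cs₁ with
    | nil => simp at h
    | cons c cs' =>
      simp only [List.length_cons, Nat.succ.injEq] at h
      show schedCost c₀ (r :: (σ' ++ σ₂)) (c :: (cs' ++ cs₂)) = _
      rw [schedCost, ih cs' cs₂ c h, schedCost]
      rw [List.getLastD_cons]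
      omega

theorem OPT_le (c₀ : V) (σ : List (V × V)) (cs : List V) (h : cs.length = σ.length) :
    OPT c₀ σ ≤ schedCost c₀ σ cs :=
  Nat.sInf_le ⟨cs, h, rfl⟩

end Cost

/-- Let `σ` be a finite request sequence (of unordered pairs
of distinct nodes) and let `P` be a phase of `OPT*` that is not the first
phase, i.e. a phase whose first request has index `i ≥ 1` (so the center
changes at `i`: `cs i ≠ cs (i-1)`), with pivot `x = cs i`.
Then `x ∈ σᵢ`. -/
theorem optStar_phase_starts_with_pivot
    {V : Type*} [DecidableEq V] [Fintype V] (hn : 3 ≤ Fintype.card V)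
    (c₀ : V) (σ : List (V × V)) (hσ : ∀ r ∈ σ, r.1 ≠ r.2)
    (cs : List V) (hstar : IsOptStar c₀ σ cs)
    (i : ℕ) (hi1 : 1 ≤ i) (hilen : i < σ.length)
    (hphase : cs.getD i c₀ ≠ cs.getD (i - 1) c₀) :
    cs.getD i c₀ = (σ.getD i (c₀, c₀)).1 ∨ cs.getD i c₀ = (σ.getD i (c₀, c₀)).2 := by
  obtain ⟨hlen, hcost, hlex⟩ := hstar
  have hic : i < cs.length := hlen ▸ hilen
  have hic1 : i - 1 < cs.length := lt_of_le_of_lt (Nat.sub_le i 1) hic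
  -- names for the pieces
  obtain ⟨A', hA'⟩ : ∃ x, cs.take (i - 1) = x := ⟨_, rfl⟩
  obtain ⟨a, ha⟩ : ∃ x, cs[i - 1] = x := ⟨_, rfl⟩
  obtain ⟨b, hb⟩ : ∃ x, cs[i] = x := ⟨_, rfl⟩
  obtain ⟨D, hD⟩ : ∃ x, cs.drop (i + 1) = x := ⟨_, rfl⟩
  obtain ⟨S, hS⟩ : ∃ x, σ.take i = x := ⟨_, rfl⟩
  obtain ⟨r, hr⟩ : ∃ x, σ[i] = x := ⟨_, rfl⟩
  obtain ⟨T, hT⟩ : ∃ x, σ.drop (i + 1) = x := ⟨_, rfl⟩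
  have hgd1 : cs.getD i c₀ = b := by rw [List.getD_eq_getElem cs c₀ hic, hb]
  have hgd2 : cs.getD (i - 1) c₀ = a := by rw [List.getD_eq_getElem cs c₀ hic1, ha]
  have hgd3 : σ.getD i (c₀, c₀) = r := by rw [List.getD_eq_getElem σ (c₀, c₀) hilen, hr]
  rw [hgd1, hgd3]
  rw [hgd1, hgd2] at hphase
  by_contra hserve
  push_neg at hserve
  have hsbr : serveCost b r = 2 := by
    unfold serveCost
    rw [if_neg]
    rintro (h | h)
    · exact hserve.1 h
    · exact hserve.2 h
  -- decompositions
  have hdrop : cs.drop (i - 1) = a :: b :: D := by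
    rw [List.drop_eq_getElem_cons hic1, show i - 1 + 1 = i from by omega,
      List.drop_eq_getElem_cons hic, ha, hb, hD]
  have hcs : cs = (A' ++ [a]) ++ b :: D := by
    conv_lhs => rw [← List.take_append_drop (i - 1) cs, hdrop, hA']
    simp
  have hσd : σ = S ++ r :: T := by
    conv_lhs => rw [← List.take_append_drop i σ,
      List.drop_eq_getElem_cons hilen, hS, hr, hT]
  have hlenA' : A'.length = i - 1 := by
    rw [← hA', List.length_take]; omega
  have hlenS : S.length = i := by rw [← hS, List.length_take]; omega
  have hlenAa : (A' ++ [a]).length = S.length := by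
    simp [hlenA', hlenS]; omega
  have hlenDT : D.length = T.length := by
    rw [← hD, ← hT, List.length_drop, List.length_drop, hlen]
  -- cost decomposition for the original schedule
  obtain ⟨K, hK⟩ : ∃ x, schedCost c₀ S (A' ++ [a]) = x := ⟨_, rfl⟩
  have hlast : (A' ++ [a]).getLastD c₀ = a := List.getLastD_concat
  have Ecs' : schedCost c₀ σ cs = K + (1 + 2 + schedCost b T D) := by
    rw [hσd, hcs, schedCost_append S (r :: T) (A' ++ [a]) (b :: D) c₀ hlenAa, hlast, hK]
    rw [schedCost, if_neg hphase, hsbr]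
  -- cost of a modified schedule that delays the migration by one step
  have Emod : ∀ D₂ : List V, D₂.length = T.length →
      schedCost c₀ σ ((A' ++ [a]) ++ a :: D₂) =
        K + (serveCost a r + schedCost a T D₂) := by
    intro D₂ hD₂
    rw [hσd, schedCost_append S (r :: T) (A' ++ [a]) (a :: D₂) c₀ hlenAa, hlast, hK]
    rw [schedCost, if_pos rfl]
    omega
  have hlenmod : ∀ D₂ : List V, D₂.length = T.length →
      ((A' ++ [a]) ++ a :: D₂).length = σ.length := by
    intro D₂ hD₂
    rw [hσd]
    simp only [List.length_append, List.length_cons, List.length_nil] at hlenAa ⊢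
    omega
  have hOPT : OPT c₀ σ = K + (1 + 2 + schedCost b T D) := by rw [← hcost, Ecs']
  -- case analysis on D / T
  rcases D with _ | ⟨d, D'⟩ <;> rcases T with _ | ⟨t, T'⟩
  · -- D = [], T = []
    have h1 := Emod [] (by simp)
    have h2 := OPT_le c₀ σ ((A' ++ [a]) ++ a :: ([] : List V)) (hlenmod [] (by simp))
    rw [h1] at h2
    have h3 : schedCost a ([] : List (V × V)) ([] : List V) = 0 := rfl
    have h4 : schedCost b ([] : List (V × V)) ([] : List V) = 0 := rfl
    have h5 := serveCost_le_two a r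
    rw [hOPT] at h2
    omega
  · simp at hlenDT
  · simp at hlenDT
  · -- D = d :: D', T = t :: T'
    have hLDT : (d :: D' : List V).length = (t :: T' : List (V × V)).length := hlenDT
    by_cases hdb : d = b
    · -- cost-neutral move; contradiction via the lexicographic tie-break
      subst hdb
      obtain ⟨X, hX⟩ : ∃ x, serveCost d t + schedCost d T' D' = x := ⟨_, rfl⟩
      have hcostb : schedCost d (t :: T') (d :: D') = X := by
        rw [schedCost, if_pos rfl, ← hX]; omega
      have hcosta : schedCost a (t :: T') (d :: D') = 1 + X := by
        rw [schedCost, if_neg hphase, ← hX]; omega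
      have h1 := Emod (d :: D') hLDT
      rw [hcosta] at h1
      have h2 := OPT_le c₀ σ ((A' ++ [a]) ++ a :: d :: D') (hlenmod (d :: D') hLDT)
      have h5 := serveCost_le_two a r
      have hOPT2 : OPT c₀ σ = K + (3 + X) := by rw [hOPT, hcostb]
      have hmodopt : schedCost c₀ σ ((A' ++ [a]) ++ a :: d :: D') = OPT c₀ σ := by
        omega
      have hle := hlex ((A' ++ [a]) ++ a :: d :: D') (hlenmod (d :: D') hLDT) hmodopt
      obtain ⟨M, m, k, rest, hk1, hk2⟩ :=
        key_phase a d (fun h => hphase h.symm) A' D'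
      have e1 : cs = A' ++ a :: d :: d :: D' := by rw [hcs]; simp
      have e2 : (A' ++ [a]) ++ a :: d :: D' = A' ++ a :: a :: d :: D' := by simp
      rw [e1, hk1] at hle
      rw [e2, hk2] at hle
      refine absurd ?_ (not_lt_of_ge hle)
      rw [List.reverse_append, List.reverse_append]
      simp only [List.reverse_cons, List.append_assoc, List.nil_append,
        List.cons_append]
      exact lex_append_lt rest.reverse (Nat.lt_succ_self k) _ _
    · -- strictly cheaper schedule; contradiction with optimality
      obtain ⟨X, hX⟩ : ∃ x, serveCost d t + schedCost d T' D' = x := ⟨_, rfl⟩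
      have hcostb : schedCost b (t :: T') (d :: D') = 1 + X := by
        rw [schedCost, if_neg hdb, ← hX]; omega
      have hcosta : schedCost a (t :: T') (d :: D') ≤ 1 + X := by
        rw [schedCost, ← hX]
        have : (if d = a then 0 else 1) ≤ 1 := by split <;> omega
        omega
      have h1 := Emod (d :: D') hLDT
      have h2 := OPT_le c₀ σ ((A' ++ [a]) ++ a :: d :: D') (hlenmod (d :: D') hLDT)
      have h5 := serveCost_le_two a r
      rw [h1] at h2
      rw [hOPT, hcostb] at h2
      omega
end

section
/- Run PivotTracking on a finite request sequence σ and consider any run of γ ≥ 1 consecutive requests on each of which PivotTracking applies its intersection behavior. Then the total cost (migrations plus serving costs) that PivotTracking pays on these γ requests is at most γ + min{2, γ}. -/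
/-- One step of the deterministic algorithm PivotTracking (state = (center,
candidate set)); tie-breaking in the intersection behavior by the fixed rule `tb`. -/
def ptStep {V : Type*} [DecidableEq V] (tb : V → V → V) (st : V × Finset V)
    (r : V × V) : V × Finset V :=
  if (st.2 ∩ {r.1, r.2}).Nonempty then
    let C' := st.2 ∩ {r.1, r.2}
    (if st.1 ∈ C' then st.1
     else if C' = {r.1, r.2} then tb r.1 r.2
     else if r.1 ∈ C' then r.1 else r.2, C')
  else (st.1, st.2 ∪ {r.1, r.2})

/-- The sequence of states of PivotTracking: `(ptStates tb c₀ σ).get i` is the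
state (center, candidate set) just before the `i`-th request is served. -/
def ptStates {V : Type*} [DecidableEq V] (tb : V → V → V) (c₀ : V)
    (σ : List (V × V)) : List (V × Finset V) :=
  σ.scanl (ptStep tb) (c₀, {c₀})

/-- The cost (migration plus serving) PivotTracking pays on the `i`-th
request of `σ` (0-based). -/
def ptPay {V : Type*} [DecidableEq V] (tb : V → V → V) (c₀ : V)
    (σ : List (V × V)) (i : ℕ) : ℕ :=
  (if ((ptStates tb c₀ σ).getD (i + 1) (c₀, {c₀})).1
      = ((ptStates tb c₀ σ).getD i (c₀, {c₀})).1 then 0 else 1)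
    + serveCost ((ptStates tb c₀ σ).getD (i + 1) (c₀, {c₀})).1 (σ.getD i (c₀, c₀))

/- ======================= auxiliary lemmas ======================= -/

lemma scanl_getD_zero {α β : Type*} (f : β → α → β) (d : β) (l : List α) (b : β) :
    (l.scanl f b).getD 0 d = b := by
  cases l <;> simp [List.scanl_cons]

lemma scanl_getD_succ {α β : Type*} (f : β → α → β) (d : β) (d' : α) :
    ∀ (l : List α) (b : β) (i : ℕ), i < l.length →
      (l.scanl f b).getD (i + 1) d = f ((l.scanl f b).getD i d) (l.getD i d') := by
  intro l
  induction l with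
  | nil => intro b i h; simp at h
  | cons a l ih =>
    intro b i h
    cases i with
    | zero =>
      simp only [List.scanl_cons, List.singleton_append, List.getD_cons_succ,
        List.getD_cons_zero]
      rw [scanl_getD_zero]
    | succ i =>
      simp only [List.scanl_cons, List.getD_cons_succ]
      exact ih (f b a) i (by simpa using h)

lemma length_scanl' {α β : Type*} (f : β → α → β) (b : β) (l : List α) :
    (l.scanl f b).length = l.length + 1 := by
  induction l generalizing b with
  | nil => rfl
  | cons a l ih => simp [List.scanl_cons, ih]

lemma ptStep_of_inter {V : Type*} [DecidableEq V] (tb : V → V → V)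
    (s : V × Finset V) (r : V × V) (h : (s.2 ∩ {r.1, r.2}).Nonempty) :
    ptStep tb s r =
      (if s.1 ∈ s.2 ∩ {r.1, r.2} then s.1
       else if s.2 ∩ {r.1, r.2} = {r.1, r.2} then tb r.1 r.2
       else if r.1 ∈ s.2 ∩ {r.1, r.2} then r.1 else r.2, s.2 ∩ {r.1, r.2}) := by
  unfold ptStep
  rw [if_pos h]

lemma ptStep_of_union {V : Type*} [DecidableEq V] (tb : V → V → V)
    (s : V × Finset V) (r : V × V) (h : ¬ (s.2 ∩ {r.1, r.2}).Nonempty) :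
    ptStep tb s r = (s.1, s.2 ∪ {r.1, r.2}) := by
  unfold ptStep
  rw [if_neg h]

lemma ptStep_mem {V : Type*} [DecidableEq V] (tb : V → V → V)
    (htb : ∀ u v : V, tb u v = u ∨ tb u v = v)
    (s : V × Finset V) (r : V × V) (h : s.1 ∈ s.2) :
    (ptStep tb s r).1 ∈ (ptStep tb s r).2 := by
  by_cases hne : (s.2 ∩ {r.1, r.2}).Nonempty
  · rw [ptStep_of_inter tb s r hne]
    by_cases h1 : s.1 ∈ s.2 ∩ {r.1, r.2}
    · simpa [h1] using h1
    · simp only [if_neg h1]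
      by_cases h2 : s.2 ∩ {r.1, r.2} = ({r.1, r.2} : Finset V)
      · simp only [if_pos h2, h2]
        rcases htb r.1 r.2 with h | h <;> simp [h]
      · simp only [if_neg h2]
        by_cases h3 : r.1 ∈ s.2 ∩ {r.1, r.2}
        · simpa [h3] using h3
        · simp only [if_neg h3]
          obtain ⟨x, hx⟩ := hne
          have hx2 : x = r.1 ∨ x = r.2 := by
            have := (Finset.mem_inter.1 hx).2
            simpa using this
          rcases hx2 with rfl | rfl
          · exact absurd hx h3
          · exact hx
  · rw [ptStep_of_union tb s r hne]
    exact Finset.mem_union_left _ h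

/-- Run PivotTracking on a finite request sequence `σ` and
consider any run of `γ ≥ 1` consecutive requests (indices `j, …, j+γ-1`) on
each of which PivotTracking applies its intersection behavior.  Then the total
cost (migrations plus serving costs) PivotTracking pays on these `γ` requests
is at most `γ + min 2 γ`. -/
theorem pivotTracking_intersection_run_cost
    {V : Type*} [DecidableEq V] [Fintype V] (hn : 3 ≤ Fintype.card V)
    (c₀ : V) (σ : List (V × V)) (hσ : ∀ r ∈ σ, r.1 ≠ r.2)
    (tb : V → V → V) (htb : ∀ u v : V, tb u v = u ∨ tb u v = v)
    (j γ : ℕ) (hγ : 1 ≤ γ) (hlen : j + γ ≤ σ.length)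
    (hint : ∀ k, j ≤ k → k < j + γ →
      (((ptStates tb c₀ σ).getD k (c₀, {c₀})).2 ∩
        {(σ.getD k (c₀, c₀)).1, (σ.getD k (c₀, c₀)).2}).Nonempty) :
    ∑ k ∈ Finset.Ico j (j + γ), ptPay tb c₀ σ k ≤ γ + min 2 γ := by
  classical
  set st : ℕ → V × Finset V := fun k => (ptStates tb c₀ σ).getD k (c₀, {c₀}) with hst
  -- the step relation
  have hstep : ∀ k, k < σ.length →
      st (k + 1) = ptStep tb (st k) (σ.getD k (c₀, c₀)) := by
    intro k hk
    rw [hst]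
    exact scanl_getD_succ (ptStep tb) (c₀, {c₀}) (c₀, c₀) σ (c₀, {c₀}) k hk
  -- the center always belongs to the candidate set
  have hmem : ∀ k, (st k).1 ∈ (st k).2 := by
    intro k
    induction k with
    | zero =>
      rw [hst]
      show ((ptStates tb c₀ σ).getD 0 (c₀, {c₀})).1 ∈ _
      rw [ptStates, scanl_getD_zero]
      simp
    | succ k ih =>
      by_cases hk : k < σ.length
      · rw [hstep k hk]
        exact ptStep_mem tb htb _ _ ih
      · have hlen' : (ptStates tb c₀ σ).length ≤ k + 1 := by
          rw [ptStates, length_scanl']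
          omega
        have hd : st (k + 1) = (c₀, {c₀}) := by
          rw [hst]
          exact List.getD_eq_default _ _ hlen'
        rw [hd]
        simp
  -- abbreviation for the migration indicator
  set ind : ℕ → ℕ := fun k => if (st (k + 1)).1 = (st k).1 then 0 else 1 with hind
  -- for intersection steps: pay = ind + 1
  have hrun : ∀ k, j ≤ k → k < j + γ →
      (st (k + 1)).2 = (st k).2 ∩
        {(σ.getD k (c₀, c₀)).1, (σ.getD k (c₀, c₀)).2} ∧
      ptPay tb c₀ σ k = ind k + 1 ∧
      ind k + min (st (k + 1)).2.card 3 ≤ min (st k).2.card 3 := by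
    intro k hjk hkγ
    have hk : k < σ.length := by omega
    have hI := hint k hjk hkγ
    set r : V × V := σ.getD k (c₀, c₀) with hr
    have hI' : ((st k).2 ∩ {r.1, r.2}).Nonempty := hI
    have hstep' := hstep k hk
    rw [ptStep_of_inter tb _ _ hI'] at hstep'
    have hC' : (st (k + 1)).2 = (st k).2 ∩ {r.1, r.2} := by rw [hstep']
    -- new center is in new candidate set
    have hcm : (st (k + 1)).1 ∈ (st (k + 1)).2 := hmem (k + 1)
    have hcm2 : (st (k + 1)).1 ∈ ({r.1, r.2} : Finset V) := by
      rw [hC'] at hcm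
      exact (Finset.mem_inter.1 hcm).2
    have hserve : serveCost (st (k + 1)).1 r = 1 := by
      have : (st (k + 1)).1 = r.1 ∨ (st (k + 1)).1 = r.2 := by simpa using hcm2
      rw [serveCost, if_pos this]
    have hpay : ptPay tb c₀ σ k = ind k + 1 := by
      have : ptPay tb c₀ σ k = ind k + serveCost (st (k + 1)).1 r := rfl
      rw [this, hserve]
    refine ⟨hC', hpay, ?_⟩
    -- potential argument
    have hcard2 : ((st (k + 1)).2).card ≤ 2 := by
      rw [hC']
      calc ((st k).2 ∩ {r.1, r.2}).card ≤ ({r.1, r.2} : Finset V).card :=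
            Finset.card_le_card Finset.inter_subset_right
        _ ≤ 2 := by
            have := Finset.card_insert_le r.1 ({r.2} : Finset V)
            simpa using this
    have hsub : (st (k + 1)).2 ⊆ (st k).2 := by
      rw [hC']; exact Finset.inter_subset_left
    by_cases heq : (st (k + 1)).1 = (st k).1
    · have : ind k = 0 := by rw [hind]; simp [heq]
      rw [this]
      have := Finset.card_le_card hsub
      omega
    · have hind1 : ind k = 1 := by rw [hind]; simp [heq]
      -- the old center is not in the new candidate set
      have hold : (st k).1 ∉ (st (k + 1)).2 := by
        intro hcon
        rw [hC'] at hcon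
        have : (st (k + 1)).1 = (st k).1 := by
          rw [hstep', if_pos hcon]
        exact heq this
      have hss : (st (k + 1)).2 ⊂ (st k).2 :=
        ⟨hsub, fun hcon => hold (hcon (hmem k))⟩
      have := Finset.card_lt_card hss
      omega
  -- telescoping the potential
  have htel : ∀ m, m ≤ γ →
      (∑ k ∈ Finset.Ico j (j + m), ind k) + min (st (j + m)).2.card 3
        ≤ min (st j).2.card 3 := by
    intro m
    induction m with
    | zero => intro _; simp
    | succ m ih =>
      intro hm
      have h1 := ih (Nat.le_of_succ_le hm)
      have h2 := (hrun (j + m) (Nat.le_add_right _ _) (by omega)).2.2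
      rw [show j + (m + 1) = (j + m) + 1 by omega,
        Finset.sum_Ico_succ_top (Nat.le_add_right j m)]
      omega
  -- candidate set at the end is nonempty
  have hend : 1 ≤ (st (j + γ)).2.card :=
    Finset.card_pos.2 ⟨_, hmem (j + γ)⟩
  have hsum2 : (∑ k ∈ Finset.Ico j (j + γ), ind k) ≤ 2 := by
    have := htel γ le_rfl
    have h3 : min (st j).2.card 3 ≤ 3 := min_le_right _ _
    omega
  have hsumγ : (∑ k ∈ Finset.Ico j (j + γ), ind k) ≤ γ := by
    calc (∑ k ∈ Finset.Ico j (j + γ), ind k)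
        ≤ ∑ k ∈ Finset.Ico j (j + γ), 1 := by
          refine Finset.sum_le_sum fun k _ => ?_
          have : ind k = if (st (k + 1)).1 = (st k).1 then 0 else 1 := rfl
          rw [this]
          split <;> omega
      _ = γ := by simp
  have hpays : ∑ k ∈ Finset.Ico j (j + γ), ptPay tb c₀ σ k
      = (∑ k ∈ Finset.Ico j (j + γ), ind k) + γ := by
    rw [Finset.sum_congr rfl fun k hk => by
      rw [(hrun k (Finset.mem_Ico.1 hk).1 (Finset.mem_Ico.1 hk).2).2.1]]
    rw [Finset.sum_add_distrib]
    simp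
  rw [hpays]
  omega
end
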